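/- Let β > 0, α > 1, and ψ_w > 0 be real numbers. Define f : (0, ∞) → ℝ by f(ψ) = log(ψ_w^β + ψ^β) − (β/α)·log ψ. Then f has a unique global minimizer on (0, ∞), located at ψ* = (α − 1)^{−1/β}·ψ_w; equivalently, log ψ* = −(1/β)·log(α − 1) + log ψ_w, and f(ψ*) < f(ψ) for every ψ ∈ (0,∞) with ψ ≠ ψ*. -/

import Mathlib

lemma pdpo_aux (c α : ℝ) (hc : 0 < c) (hα : 1 < α) :
    ∀ x : ℝ, 0 < x → x ≠ c / (α - 1) →
      α * Real.log (c + c / (α - 1)) - Real.log (c / (α - 1)) <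
        α * Real.log (c + x) - Real.log x := by
  have hα1 : 0 < α - 1 := by linarith
  set xs := c / (α - 1) with hxs
  have hxs0 : 0 < xs := div_pos hc hα1
  set h : ℝ → ℝ := fun x => α * Real.log (c + x) - Real.log x with hh
  have hderiv : ∀ x : ℝ, 0 < x →
      HasDerivAt h (((α - 1) * x - c) / (x * (c + x))) x := by
    intro x hx
    have hcx : 0 < c + x := by linarith
    have h1 : HasDerivAt (fun y : ℝ => Real.log (c + y)) ((c + x)⁻¹) x := by
      have h2 : HasDerivAt (fun y : ℝ => c + y) 1 x := (hasDerivAt_id x).const_add c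
      have h4 := (Real.hasDerivAt_log hcx.ne').comp x h2
      rw [mul_one] at h4
      exact h4
    have h3 := (h1.const_mul α).sub (Real.hasDerivAt_log hx.ne')
    have h3' : HasDerivAt h (α * (c + x)⁻¹ - x⁻¹) x := h3
    convert h3' using 1
    field_simp
    ring
  have hanti : StrictAntiOn h (Set.Ioc 0 xs) := by
    apply strictAntiOn_of_deriv_neg (convex_Ioc 0 xs)
    · intro x hx
      exact (hderiv x hx.1).continuousAt.continuousWithinAt
    · intro x hx
      rw [interior_Ioc] at hx
      rw [(hderiv x hx.1).deriv]
      apply div_neg_of_neg_of_pos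
      · have : x < xs := hx.2
        rw [hxs, lt_div_iff₀ hα1] at this
        nlinarith
      · exact mul_pos hx.1 (by linarith [hx.1])
  have hmono : StrictMonoOn h (Set.Ici xs) := by
    apply strictMonoOn_of_deriv_pos (convex_Ici xs)
    · intro x hx
      have : 0 < x := lt_of_lt_of_le hxs0 hx
      exact (hderiv x this).continuousAt.continuousWithinAt
    · intro x hx
      rw [interior_Ici] at hx
      have hx0 : 0 < x := lt_trans hxs0 hx
      rw [(hderiv x hx0).deriv]
      apply div_pos
      · have : xs < x := hx
        rw [hxs, div_lt_iff₀ hα1] at this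
        nlinarith
      · have : 0 < c + x := by linarith
        positivity
  intro x hx hne
  rcases lt_or_gt_of_ne hne with hlt | hgt
  · exact hanti ⟨hx, hlt.le⟩ ⟨hxs0, le_refl _⟩ hlt
  · exact hmono (Set.mem_Ici.mpr (le_refl _)) hgt.le hgt

theorem pdpo_optimum (β α ψw : ℝ) (hβ : 0 < β) (hα : 1 < α) (hψw : 0 < ψw)
    (f : ℝ → ℝ) (hf : ∀ ψ, f ψ = Real.log (ψw ^ β + ψ ^ β) - (β / α) * Real.log ψ)
    (ψstar : ℝ) (hψstar : ψstar = (α - 1) ^ (-1 / β) * ψw) :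
    (0 < ψstar) ∧
    (Real.log ψstar = -(1 / β) * Real.log (α - 1) + Real.log ψw) ∧
    (∀ ψ : ℝ, 0 < ψ → ψ ≠ ψstar → f ψstar < f ψ) := by
  have hα1 : 0 < α - 1 := by linarith
  have hα0 : 0 < α := by linarith
  have hpow : 0 < (α - 1 : ℝ) ^ (-1 / β) := Real.rpow_pos_of_pos hα1 _
  have hψstar0 : 0 < ψstar := by rw [hψstar]; positivity
  have hlog : Real.log ψstar = -(1 / β) * Real.log (α - 1) + Real.log ψw := by
    rw [hψstar, Real.log_mul hpow.ne' hψw.ne', Real.log_rpow hα1, neg_div]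
  refine ⟨hψstar0, hlog, ?_⟩
  set c := ψw ^ β with hc
  have hc0 : 0 < c := Real.rpow_pos_of_pos hψw β
  -- ψstar ^ β = c / (α - 1)
  have hstarpow : ψstar ^ β = c / (α - 1) := by
    rw [hψstar, Real.mul_rpow hpow.le hψw.le, ← Real.rpow_mul hα1.le]
    have : -1 / β * β = -1 := by field_simp
    rw [this, Real.rpow_neg_one, ← hc, inv_mul_eq_div]
  -- f ψ = (1/α) * (α * log (c + ψ^β) - log (ψ^β)) for ψ > 0
  have hfeq : ∀ ψ : ℝ, 0 < ψ →
      f ψ = (1 / α) * (α * Real.log (c + ψ ^ β) - Real.log (ψ ^ β)) := by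
    intro ψ hψ
    rw [hf, Real.log_rpow hψ]
    have : c + ψ ^ β = ψw ^ β + ψ ^ β := by rw [hc]
    rw [this]
    field_simp
  intro ψ hψ hne
  have hψpow : 0 < ψ ^ β := Real.rpow_pos_of_pos hψ β
  have hne' : ψ ^ β ≠ c / (α - 1) := by
    rw [← hstarpow]
    intro heq
    apply hne
    rcases lt_trichotomy ψ ψstar with h | h | h
    · exact absurd heq (ne_of_lt (Real.rpow_lt_rpow hψ.le h hβ))
    · exact h
    · exact absurd heq (ne_of_gt (Real.rpow_lt_rpow hψstar0.le h hβ))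
  have key := pdpo_aux c α hc0 hα (ψ ^ β) hψpow hne'
  rw [hfeq ψ hψ, hfeq ψstar hψstar0, hstarpow]
  exact mul_lt_mul_of_pos_left key (by positivity)
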